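/- Suppose each approximate backward flow B̄_{h,k} is a bijection of ℝ^d with inverse F̄_{h,k}, and define the transported particles by T̄_h φ⁰_{h,k}(x) := φ⁰_{h,k}(B̄_{h,k}(x)), so that they are supported in F̄_{h,k}(Σ⁰_{h,k}); set Σ_{h,k} := F̄(Σ⁰_{h,k}) ∪ F̄_{h,k}(Σ⁰_{h,k}) and e_B(h) := sup_{k∈ℤ^d} sup_{x∈Σ_{h,k}} ‖B̄_{h,k}(x) − B̄(x)‖_∞. Then there exists a constant C depending only on c_w, L_φ, ρ⁰ and d (independent of h, f⁰, the flow F̄ and the approximate flows) such that ‖(T̄_h − T̄_ex) f⁰_h‖_{L^∞(ℝ^d)} ≤ C (1 + e_B(h)/h)^d · (e_B(h)/h) · ‖f⁰‖_{L^∞}. -/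

import Mathlib

open scoped NNReal
open Set

/-- Grid node `x⁰_k := h k`. -/
noncomputable def node (d : ℕ) (h : ℝ) (k : Fin d → ℤ) : Fin d → ℝ :=
  fun i => h * (k i : ℝ)

/-- Particle shape function `φ⁰_{h,k}(x) := h^{-d} φ(h⁻¹ x - k)`. -/
noncomputable def part (d : ℕ) (h : ℝ) (φ : (Fin d → ℝ) → ℝ)
    (k : Fin d → ℤ) (x : Fin d → ℝ) : ℝ :=
  (h ^ d)⁻¹ * φ (fun i => x i / h - (k i : ℝ))

/-- when the approximate backward flows `B̄_{h,k}` are bijections with inverses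
`F̄_{h,k}`, the transport operator `T̄_h φ⁰_{h,k} := φ⁰_{h,k} ∘ B̄_{h,k}` satisfies
`‖(T̄_h − T̄_ex) f⁰_h‖_∞ ≤ C (1 + e_B/h)^d (e_B/h) ‖f⁰‖_∞` with `C = C(c_w, L_φ, ρ⁰, d)`,
where `e_B` is the backward flow error on `Σ_{h,k} := F̄(Σ⁰_{h,k}) ∪ F̄_{h,k}(Σ⁰_{h,k})`. -/
theorem approx_transport_error_bijective_flows
    (d : ℕ) (hd : 1 ≤ d) (cw : ℝ) (hcw : 0 < cw) (Lφ : ℝ≥0)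
    (ρ0 : ℝ) (hρ0 : 0 < ρ0) :
    ∃ C : ℝ, 0 < C ∧
      ∀ (h : ℝ), 0 < h →
      ∀ (φ : (Fin d → ℝ) → ℝ), LipschitzWith Lφ φ → (∀ x, φ x ≠ 0 → ‖x‖ ≤ ρ0) →
      ∀ (f0 : (Fin d → ℝ) → ℝ), BddAbove (Set.range fun x => |f0 x|) →
      ∀ (w : (Fin d → ℤ) → ℝ), (∀ k, |w k| ≤ cw * h ^ d * ⨆ y, |f0 y|) →
      ∀ (F : (Fin d → ℝ) ≃ (Fin d → ℝ))
        (Bh : (Fin d → ℤ) → (Fin d → ℝ) ≃ (Fin d → ℝ))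
        (eB : ℝ), 0 ≤ eB →
        (∀ k, ∀ x ∈ (F '' Function.support (part d h φ k)
              ∪ (Bh k).symm '' Function.support (part d h φ k)),
            ‖Bh k x - F.symm x‖ ≤ eB) →
      ∀ x : Fin d → ℝ,
        |(∑' k : Fin d → ℤ, w k * part d h φ k (Bh k x))
            - ∑' k : Fin d → ℤ, w k * part d h φ k (F.symm x)|
          ≤ C * (1 + eB / h) ^ d * (eB / h) * ⨆ y, |f0 y| := by
  refine ⟨cw * ((Lφ : ℝ) + 1) * (2 * ρ0 + 2) ^ d, by positivity, ?_⟩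
  intro h hh φ hLip hsuppφ f0 hbdd w hw F Bh eB heB0 heB x
  set M : ℝ := ⨆ y, |f0 y| with hMdef
  have hM0 : 0 ≤ M := le_trans (abs_nonneg _) (le_ciSup hbdd (fun _ => 0))
  have hε0 : 0 ≤ eB / h := div_nonneg heB0 hh.le
  set r : ℝ := ρ0 + eB / h with hrdef
  have hr0 : 0 ≤ r := by positivity
  set c : Fin d → ℝ := fun i => F.symm x i / h with hcdef
  set S : Finset (Fin d → ℤ) :=
    Fintype.piFinset (fun i => Finset.Icc ⌈c i - r⌉ ⌊c i + r⌋) with hSdef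
  -- basic support fact for `part`
  have hpart_supp : ∀ (k : Fin d → ℤ) (y : Fin d → ℝ), part d h φ k y ≠ 0 →
      ∀ i, |y i / h - (k i : ℝ)| ≤ ρ0 := by
    intro k y hy i
    have hφ : φ (fun i => y i / h - (k i : ℝ)) ≠ 0 := by
      intro h0; apply hy; simp [part, h0]
    have := hsuppφ _ hφ
    have h6 := norm_le_pi_norm (G := fun _ : Fin d => ℝ) (fun j => y j / h - (k j : ℝ)) i
    simpa [Real.norm_eq_abs] using h6.trans this
  -- key localization: if either part is nonzero then the flow error bound holds and k ∈ S
  have hkey : ∀ k : Fin d → ℤ,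
      (part d h φ k (Bh k x) ≠ 0 ∨ part d h φ k (F.symm x) ≠ 0) →
      ‖Bh k x - F.symm x‖ ≤ eB ∧ k ∈ S := by
    intro k hk
    have hdist : ‖Bh k x - F.symm x‖ ≤ eB := by
      rcases hk with hk | hk
      · refine heB k x (Or.inr ⟨Bh k x, hk, (Bh k).symm_apply_apply x⟩)
      · refine heB k x (Or.inl ⟨F.symm x, hk, F.apply_symm_apply x⟩)
    refine ⟨hdist, ?_⟩
    have hco : ∀ i, |c i - (k i : ℝ)| ≤ r := by
      intro i
      rcases hk with hk | hk
      · have h1 : |Bh k x i / h - (k i : ℝ)| ≤ ρ0 := hpart_supp k _ hk i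
        have h2 : |F.symm x i - Bh k x i| ≤ eB := by
          have := norm_le_pi_norm (Bh k x - F.symm x) i
          have h3 : |Bh k x i - F.symm x i| ≤ eB := le_trans this hdist
          rwa [abs_sub_comm]
        have h4 : |c i - Bh k x i / h| ≤ eB / h := by
          rw [hcdef]
          have : F.symm x i / h - Bh k x i / h = (F.symm x i - Bh k x i) / h := by ring
          rw [this, abs_div, abs_of_pos hh]
          exact div_le_div_of_nonneg_right h2 hh.le |>.trans_eq rfl
        calc |c i - (k i : ℝ)| ≤ |c i - Bh k x i / h| + |Bh k x i / h - (k i : ℝ)| :=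
              abs_sub_le _ _ _
          _ ≤ eB / h + ρ0 := add_le_add h4 h1
          _ = r := by rw [hrdef]; ring
      · have h1 : |F.symm x i / h - (k i : ℝ)| ≤ ρ0 := hpart_supp k _ hk i
        exact h1.trans (by rw [hrdef]; linarith)
    rw [hSdef, Fintype.mem_piFinset]
    intro i
    have := hco i
    rw [abs_le] at this
    rw [Finset.mem_Icc]
    constructor
    · exact Int.ceil_le.mpr (by linarith [this.1])
    · exact Int.le_floor.mpr (by linarith [this.2])
  -- per-term bound
  have hterm : ∀ k : Fin d → ℤ,
      |w k * part d h φ k (Bh k x) - w k * part d h φ k (F.symm x)|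
        ≤ cw * (Lφ : ℝ) * (eB / h) * M := by
    intro k
    by_cases hk : part d h φ k (Bh k x) = 0 ∧ part d h φ k (F.symm x) = 0
    · rw [hk.1, hk.2]; simp; positivity
    · have hk' : part d h φ k (Bh k x) ≠ 0 ∨ part d h φ k (F.symm x) ≠ 0 := by
        by_contra hc; push_neg at hc; exact hk ⟨hc.1, hc.2⟩
      obtain ⟨hdist, -⟩ := hkey k hk'
      have hφdiff : |φ (fun i => Bh k x i / h - (k i : ℝ))
          - φ (fun i => F.symm x i / h - (k i : ℝ))| ≤ (Lφ : ℝ) * (eB / h) := by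
        have hd2 : dist (fun i => Bh k x i / h - (k i : ℝ))
            (fun i => F.symm x i / h - (k i : ℝ)) ≤ eB / h := by
          rw [dist_eq_norm]
          rw [pi_norm_le_iff_of_nonneg hε0]
          intro i
          have h1 : ((fun i => Bh k x i / h - (k i : ℝ)) - fun i => F.symm x i / h - (k i : ℝ)) i
              = (Bh k x i - F.symm x i) / h := by
            simp [Pi.sub_apply]; ring
          rw [Real.norm_eq_abs, h1, abs_div, abs_of_pos hh]
          exact div_le_div_of_nonneg_right
            (le_trans (norm_le_pi_norm (Bh k x - F.symm x) i) hdist) hh.le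
        calc |φ _ - φ _| = dist (φ (fun i => Bh k x i / h - (k i : ℝ)))
              (φ (fun i => F.symm x i / h - (k i : ℝ))) := (Real.dist_eq _ _).symm
          _ ≤ (Lφ : ℝ) * dist _ _ := hLip.dist_le_mul _ _
          _ ≤ (Lφ : ℝ) * (eB / h) := by
              exact mul_le_mul_of_nonneg_left hd2 (Lφ : ℝ≥0).coe_nonneg
      have hpd : |part d h φ k (Bh k x) - part d h φ k (F.symm x)|
          ≤ (h ^ d)⁻¹ * ((Lφ : ℝ) * (eB / h)) := by
        rw [part, part, ← mul_sub, abs_mul, abs_inv, abs_pow, abs_of_pos hh]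
        exact mul_le_mul_of_nonneg_left hφdiff (by positivity)
      calc |w k * part d h φ k (Bh k x) - w k * part d h φ k (F.symm x)|
          = |w k| * |part d h φ k (Bh k x) - part d h φ k (F.symm x)| := by
            rw [← abs_mul, mul_sub]
        _ ≤ (cw * h ^ d * M) * ((h ^ d)⁻¹ * ((Lφ : ℝ) * (eB / h))) := by
            apply mul_le_mul (hw k) hpd (abs_nonneg _)
            have : 0 ≤ cw * h ^ d * M := by positivity
            exact this
        _ = cw * (Lφ : ℝ) * (eB / h) * M := by
            field_simp
  -- functions vanish off S
  have hzero : ∀ k ∉ S, w k * part d h φ k (Bh k x) = 0 ∧ w k * part d h φ k (F.symm x) = 0 := by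
    intro k hk
    constructor
    · by_cases h1 : part d h φ k (Bh k x) = 0
      · rw [h1, mul_zero]
      · exact absurd ((hkey k (Or.inl h1)).2) hk
    · by_cases h1 : part d h φ k (F.symm x) = 0
      · rw [h1, mul_zero]
      · exact absurd ((hkey k (Or.inr h1)).2) hk
  have hsum1 : Summable (fun k => w k * part d h φ k (Bh k x)) := by
    apply summable_of_finite_support
    apply S.finite_toSet.subset
    intro k hk
    by_contra hks
    exact hk ((hzero k hks).1)
  have hsum2 : Summable (fun k => w k * part d h φ k (F.symm x)) := by
    apply summable_of_finite_support
    apply S.finite_toSet.subset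
    intro k hk
    by_contra hks
    exact hk ((hzero k hks).2)
  rw [← Summable.tsum_sub hsum1 hsum2,
    tsum_eq_sum (s := S) (fun k hk => by rw [(hzero k hk).1, (hzero k hk).2, sub_zero])]
  -- cardinality bound
  have hcard : (S.card : ℝ) ≤ ((2 * ρ0 + 2) * (1 + eB / h)) ^ d := by
    rw [hSdef, Fintype.card_piFinset]
    push_cast
    calc ∏ i : Fin d, ((Finset.Icc ⌈c i - r⌉ ⌊c i + r⌋).card : ℝ)
        ≤ ∏ _i : Fin d, ((2 * ρ0 + 2) * (1 + eB / h)) := ?_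
      _ = ((2 * ρ0 + 2) * (1 + eB / h)) ^ d := by
          rw [Finset.prod_const, Finset.card_fin]
    apply Finset.prod_le_prod
    · intro i _; positivity
    · intro i _
      rw [Int.card_Icc]
      have h1 : ((⌊c i + r⌋ + 1 - ⌈c i - r⌉).toNat : ℝ)
          = ((((⌊c i + r⌋ + 1 - ⌈c i - r⌉).toNat : ℤ)) : ℝ) := by push_cast; ring
      rw [h1, Int.toNat_eq_max]
      push_cast [le_max_iff, max_le_iff]
      constructor
      · have h2 : (⌊c i + r⌋ : ℝ) ≤ c i + r := Int.floor_le _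
        have h3 : c i - r ≤ (⌈c i - r⌉ : ℝ) := Int.le_ceil _
        rw [hrdef] at h2 h3
        nlinarith [hρ0.le, hε0, mul_nonneg hρ0.le hε0]
      · positivity
  -- combine
  have hbound : |∑ k ∈ S, (w k * part d h φ k (Bh k x) - w k * part d h φ k (F.symm x))|
      ≤ (S.card : ℝ) * (cw * (Lφ : ℝ) * (eB / h) * M) := by
    calc |∑ k ∈ S, (w k * part d h φ k (Bh k x) - w k * part d h φ k (F.symm x))|
        ≤ ∑ k ∈ S, |w k * part d h φ k (Bh k x) - w k * part d h φ k (F.symm x)| :=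
          Finset.abs_sum_le_sum_abs _ _
      _ ≤ S.card • (cw * (Lφ : ℝ) * (eB / h) * M) :=
          Finset.sum_le_card_nsmul _ _ _ (fun k _ => hterm k)
      _ = (S.card : ℝ) * (cw * (Lφ : ℝ) * (eB / h) * M) := nsmul_eq_mul _ _
  refine hbound.trans ?_
  have hstep : (S.card : ℝ) * (cw * (Lφ : ℝ) * (eB / h) * M)
      ≤ ((2 * ρ0 + 2) * (1 + eB / h)) ^ d * (cw * (Lφ : ℝ) * (eB / h) * M) :=
    mul_le_mul_of_nonneg_right hcard (by positivity)
  refine hstep.trans ?_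
  rw [mul_pow]
  have hLle : (Lφ : ℝ) ≤ (Lφ : ℝ) + 1 := by linarith
  calc (2 * ρ0 + 2) ^ d * (1 + eB / h) ^ d * (cw * (Lφ : ℝ) * (eB / h) * M)
      ≤ (2 * ρ0 + 2) ^ d * (1 + eB / h) ^ d * (cw * ((Lφ : ℝ) + 1) * (eB / h) * M) := by
        apply mul_le_mul_of_nonneg_left _ (by positivity)
        apply mul_le_mul_of_nonneg_right _ hM0
        apply mul_le_mul_of_nonneg_right _ hε0
        exact mul_le_mul_of_nonneg_left hLle hcw.le
    _ = cw * ((Lφ : ℝ) + 1) * (2 * ρ0 + 2) ^ d * (1 + eB / h) ^ d * (eB / h) * M := by ring
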